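/- Let $\Omega$ be a commutative semigroup, $(L, [\cdot,\cdot]_{\alpha,\beta})_{\alpha,\beta\in\Omega}$ an $\Omega$-Lie algebra, and $p_\alpha, q_\alpha: L\to L$ two commuting families of $\Omega$-Lie algebra morphisms. Define $\{x,y\}_{\alpha,\beta} := [p_\alpha(x), q_\beta(y)]_{\alpha,\beta}$. Then $(L, \{\cdot,\cdot\}_{\alpha,\beta}, p_\alpha, q_\alpha)_{\alpha,\beta\in\Omega}$ is a BiHom-$\Omega$-Lie algebra. -/
import Mathlib


/-- Yau twist of an Ω-Lie algebra gives a BiHom-Ω-Lie algebra. -/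
theorem stmt_10
    {K : Type*} [Field K] {Ω : Type*} [CommSemigroup Ω]
    {L : Type*} [AddCommGroup L] [Module K L]
    (br : Ω → Ω → L →ₗ[K] L →ₗ[K] L)
    (p q : Ω → L →ₗ[K] L)
    -- Ω-Lie axioms
    (hskew : ∀ (α β : Ω) (x y : L), br α β x y = - br β α y x)
    (hjac : ∀ (α β γ : Ω) (x y z : L),
      br α (β * γ) x (br β γ y z) + br β (γ * α) y (br γ α z x)
        + br γ (α * β) z (br α β x y) = 0)
    -- p, q are Ω-Lie algebra morphisms
    (hp : ∀ (α β : Ω) (x y : L), p (α * β) (br α β x y) = br α β (p α x) (p β y))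
    (hq : ∀ (α β : Ω) (x y : L), q (α * β) (br α β x y) = br α β (q α x) (q β y))
    -- the families commute
    (hpq : ∀ (α : Ω) (x : L), p α (q α x) = q α (p α x))
    -- the twisted bracket
    (cbr : Ω → Ω → L → L → L)
    (hcbr : ∀ (α β : Ω) (x y : L), cbr α β x y = br α β (p α x) (q β y)) :
    -- (L, cbr, p, q) is a BiHom-Ω-Lie algebra
    (∀ (α β : Ω) (x y : L), p (α * β) (cbr α β x y) = cbr α β (p α x) (p β y)) ∧
    (∀ (α β : Ω) (x y : L), q (α * β) (cbr α β x y) = cbr α β (q α x) (q β y)) ∧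
    (∀ (α β : Ω) (x y : L), cbr α β (q α x) (p β y) = - cbr β α (q β y) (p α x)) ∧
    (∀ (α β γ : Ω) (x y z : L),
      cbr α (β * γ) (q α (q α x)) (cbr β γ (q β y) (p γ z))
        + cbr β (γ * α) (q β (q β y)) (cbr γ α (q γ z) (p α x))
        + cbr γ (α * β) (q γ (q γ z)) (cbr α β (q α x) (p β y)) = 0) := by
  refine ⟨fun α β x y => ?_, fun α β x y => ?_, fun α β x y => ?_, fun α β γ x y z => ?_⟩
  · simp only [hcbr, hp, hpq]
  · simp only [hcbr, hq, hpq]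
  · simp only [hcbr, hpq]
    rw [hskew]
  · simp only [hcbr, hq, hpq]
    exact hjac α β γ (q α (q α (p α x))) (q β (q β (p β y))) (q γ (q γ (p γ z)))
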